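/- arXiv:2310.00787 — 2 statements merged into one kernel-verified Lean document; each statement's English description precedes it below -/
import Mathlib

section
/- A linear fractional map φ(z) = (az+b)/(cz+d) with ad - bc ≠ 0 maps the open unit disk into the closed unit disk if and only if |b·conj(d) - a·conj(c)| + |ad - bc| ≤ |d|² - |c|². -/
open Complex


private lemma lfm_key_id (a b c d z : ℂ) :
    (d * (starRingEnd ℂ) d - c * (starRingEnd ℂ) c) * (a*z+b)
      = (b * (starRingEnd ℂ) d - a * (starRingEnd ℂ) c) * (c*z+d)
        + (a*d - b*c) * ((starRingEnd ℂ) d * z + (starRingEnd ℂ) c) := by ring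

private lemma lfm_cast (c d : ℂ) :
    d * (starRingEnd ℂ) d - c * (starRingEnd ℂ) c = ((‖d‖^2 - ‖c‖^2 : ℝ) : ℂ) := by
  rw [Complex.mul_conj, Complex.mul_conj, Complex.normSq_eq_norm_sq, Complex.normSq_eq_norm_sq]
  push_cast
  ring

private lemma lfm_conj_le (c d z : ℂ) (hz : ‖z‖ ≤ 1) (hp : ‖c‖ ≤ ‖d‖) :
    ‖(starRingEnd ℂ) d * z + (starRingEnd ℂ) c‖ ≤ ‖c*z+d‖ := by
  have key : Complex.normSq (c*z+d) - Complex.normSq ((starRingEnd ℂ) d * z + (starRingEnd ℂ) c)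
      = (Complex.normSq d - Complex.normSq c) * (1 - Complex.normSq z) := by
    simp [Complex.normSq_apply, Complex.mul_re, Complex.mul_im, Complex.add_re, Complex.add_im]
    ring
  have h1 : Complex.normSq z = ‖z‖^2 := by rw [Complex.normSq_eq_norm_sq]
  have h2 : Complex.normSq c = ‖c‖^2 := by rw [Complex.normSq_eq_norm_sq]
  have h3 : Complex.normSq d = ‖d‖^2 := by rw [Complex.normSq_eq_norm_sq]
  have h4 : Complex.normSq (c*z+d) = ‖c*z+d‖^2 := by
    rw [Complex.normSq_eq_norm_sq]
  have h5 : Complex.normSq ((starRingEnd ℂ) d * z + (starRingEnd ℂ) c)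
      = ‖(starRingEnd ℂ) d * z + (starRingEnd ℂ) c‖^2 := by
    rw [Complex.normSq_eq_norm_sq]
  have hz2 : ‖z‖^2 ≤ 1 := by nlinarith [norm_nonneg z]
  have hd2 : ‖c‖^2 ≤ ‖d‖^2 := by nlinarith [norm_nonneg c]
  have hprod : 0 ≤ (‖d‖^2 - ‖c‖^2) * (1 - ‖z‖^2) :=
    mul_nonneg (by linarith) (by linarith)
  have hsq : ‖(starRingEnd ℂ) d * z + (starRingEnd ℂ) c‖^2 ≤ ‖c*z+d‖^2 := by
    rw [h1, h2, h3] at key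
    linarith [key, h4, h5]
  nlinarith [norm_nonneg (c*z+d), norm_nonneg ((starRingEnd ℂ) d * z + (starRingEnd ℂ) c)]


private lemma lfm_chain (a b c d z : ℂ) (hz : ‖z‖ ≤ 1) (t : ℝ) (ht1 : t ≤ 1)
    (hstep : ‖a*((t:ℂ)*z)+b‖ ≤ ‖c*((t:ℂ)*z)+d‖) :
    ‖a*z+b‖ ≤ ‖c*z+d‖ + (1-t)*(‖a‖+‖c‖) := by
  have ha : ‖a*z‖ ≤ ‖a‖ := by
    rw [norm_mul]; nlinarith [norm_nonneg a, norm_nonneg z]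
  have hc : ‖c*z‖ ≤ ‖c‖ := by
    rw [norm_mul]; nlinarith [norm_nonneg c, norm_nonneg z]
  have hts : ‖((1:ℂ)-(t:ℂ))‖ = 1 - t := by
    rw [show ((1:ℂ)-(t:ℂ)) = ((1-t : ℝ) : ℂ) by push_cast; ring, Complex.norm_real,
      Real.norm_eq_abs, _root_.abs_of_nonneg (by linarith)]
  have e1 : a*z+b = (a*((t:ℂ)*z)+b) + ((1:ℂ)-(t:ℂ))*(a*z) := by ring
  have e2 : c*((t:ℂ)*z)+d = (c*z+d) - ((1:ℂ)-(t:ℂ))*(c*z) := by ring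
  have l1 : ‖a*z+b‖ ≤ ‖a*((t:ℂ)*z)+b‖ + (1-t)*‖a*z‖ := by
    rw [e1]
    calc _ ≤ ‖a*((t:ℂ)*z)+b‖ + ‖((1:ℂ)-(t:ℂ))*(a*z)‖ := norm_add_le _ _
    _ = _ := by rw [norm_mul, hts]
  have l2 : ‖c*((t:ℂ)*z)+d‖ ≤ ‖c*z+d‖ + (1-t)*‖c*z‖ := by
    rw [e2]
    calc _ ≤ ‖c*z+d‖ + ‖((1:ℂ)-(t:ℂ))*(c*z)‖ := norm_sub_le _ _
    _ = _ := by rw [norm_mul, hts]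
  have h1t : (0:ℝ) ≤ 1 - t := by linarith
  nlinarith [norm_nonneg (a*z), norm_nonneg (c*z)]

private lemma lfm_boundary (a b c d : ℂ) (h : a * d - b * c ≠ 0)
    (A : ∀ z : ℂ, ‖z‖ < 1 → ‖(a * z + b) / (c * z + d)‖ ≤ 1) :
    ∀ z : ℂ, ‖z‖ ≤ 1 → ‖a*z+b‖ ≤ ‖c*z+d‖ := by
  have step : ∀ w : ℂ, ‖w‖ < 1 → c*w+d ≠ 0 → ‖a*w+b‖ ≤ ‖c*w+d‖ := by
    intro w hw hcd
    have := A w hw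
    rwa [norm_div, div_le_one (norm_pos_iff.2 hcd)] at this
  intro z hz
  refine le_of_forall_pos_le_add ?_
  intro ε hε
  set M : ℝ := ‖a‖ + ‖c‖ + 1 with hM
  have hM0 : 0 < M := by positivity
  have hMac : ‖a‖ + ‖c‖ ≤ M := by simp [hM]
  by_cases hdeg : c*z = 0 ∧ d = 0
  · obtain ⟨hcz, hd⟩ := hdeg
    rcases eq_or_ne c 0 with hc | hc
    · exact absurd (by rw [hc, hd]; ring) h
    · have hz0 : z = 0 := by
        rcases mul_eq_zero.1 hcz with h' | h'
        · exact absurd h' hc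
        · exact h'
      subst hz0
      rw [hd]
      simp only [mul_zero, zero_add, add_zero, norm_zero]
      -- goal: ‖b‖ ≤ 0 + ε
      set δ : ℝ := min (1/2) (ε/M) with hδ
      have hδ0 : 0 < δ := by
        apply lt_min (by norm_num) (by positivity)
      have hδM : δ ≤ ε/M := min_le_right _ _
      have hδ1 : δ < 1 := lt_of_le_of_lt (min_le_left _ _) (by norm_num)
      have hwnorm : ‖((δ:ℝ):ℂ)‖ < 1 := by
        rw [Complex.norm_real, Real.norm_eq_abs, abs_of_pos hδ0]; exact hδ1
      have hden : c*((δ:ℝ):ℂ)+d ≠ 0 := by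
        rw [hd, add_zero]
        exact mul_ne_zero hc (by exact_mod_cast hδ0.ne')
      have := step _ hwnorm hden
      rw [hd, add_zero, norm_mul, Complex.norm_real, Real.norm_eq_abs, abs_of_pos hδ0] at this
      have hb : ‖b‖ ≤ ‖a*((δ:ℝ):ℂ)+b‖ + δ*‖a‖ := by
        have e : (b:ℂ) = (a*((δ:ℝ):ℂ)+b) - ((δ:ℝ):ℂ)*a := by ring
        calc ‖b‖ = ‖(a*((δ:ℝ):ℂ)+b) - ((δ:ℝ):ℂ)*a‖ := by rw [← e]
        _ ≤ ‖a*((δ:ℝ):ℂ)+b‖ + ‖((δ:ℝ):ℂ)*a‖ := norm_sub_le _ _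
        _ = _ := by rw [norm_mul, Complex.norm_real, Real.norm_eq_abs, abs_of_pos hδ0]
      have : ‖b‖ ≤ δ * (‖a‖ + ‖c‖) := by linarith [this, hb]
      have hfin : δ * (‖a‖ + ‖c‖) ≤ ε := by
        calc δ * (‖a‖ + ‖c‖) ≤ (ε/M) * M := by
              apply mul_le_mul hδM hMac (by positivity) (by positivity)
        _ = ε := by field_simp
      linarith
  · -- nondegenerate: pick t close to 1 avoiding the (at most one) pole
    set δ : ℝ := min (1/2) (ε/M) with hδ
    have hδ0 : 0 < δ := lt_min (by norm_num) (by positivity)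
    have hδM : δ ≤ ε/M := min_le_right _ _
    have hδh : δ ≤ 1/2 := min_le_left _ _
    have key : ∀ t : ℝ, 1 - δ ≤ t → t < 1 → c*((t:ℂ)*z)+d ≠ 0 →
        ‖a*z+b‖ ≤ ‖c*z+d‖ + ε := by
      intro t ht htl hden
      have ht0 : 0 < t := by linarith
      have htz : ‖(t:ℂ)*z‖ < 1 := by
        rw [norm_mul, Complex.norm_real, Real.norm_eq_abs, abs_of_pos ht0]
        nlinarith [norm_nonneg z]
      have := lfm_chain a b c d z hz t htl.le (step _ htz hden)
      have h1 : (1-t)*(‖a‖+‖c‖) ≤ ε := by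
        have h2 : 1 - t ≤ δ := by linarith
        calc (1-t)*(‖a‖+‖c‖) ≤ δ * M := by
              apply mul_le_mul h2 hMac (by positivity) hδ0.le
        _ ≤ (ε/M) * M := by nlinarith
        _ = ε := by field_simp
      linarith
    set t₁ : ℝ := 1 - δ with ht₁
    set t₂ : ℝ := 1 - δ/2 with ht₂
    by_cases hden1 : c*((t₁:ℂ)*z)+d = 0
    · -- then t₂ works
      apply key t₂ (by simp [ht₂]; linarith) (by simp [ht₂]; linarith)
      intro hden2
      have hsub : c*z*((t₁:ℂ)-(t₂:ℂ)) = 0 := by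
        have := sub_eq_zero.2 (hden1.trans hden2.symm)
        rw [← this]; ring
      have hne : ((t₁:ℝ):ℂ) - ((t₂:ℝ):ℂ) ≠ 0 := by
        rw [sub_ne_zero]
        exact_mod_cast (by simp [ht₁, ht₂]; linarith : t₁ ≠ t₂)
      have hcz : c*z = 0 := by
        rcases mul_eq_zero.1 hsub with h' | h'
        · exact h'
        · exact absurd h' hne
      have hd : d = 0 := by
        have h' : (t₁:ℂ) * (c*z) + d = 0 := by rw [← hden1]; ring
        rw [hcz] at h'
        simpa using h'
      exact hdeg ⟨hcz, hd⟩
    · exact key t₁ le_rfl (by simp [ht₁]; linarith) hden1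

private lemma lfm_easy (a b c d : ℂ) (h : a * d - b * c ≠ 0)
    (hB : ‖b * (starRingEnd ℂ) d - a * (starRingEnd ℂ) c‖ + ‖a * d - b * c‖
        ≤ ‖d‖ ^ 2 - ‖c‖ ^ 2) :
    ∀ z : ℂ, ‖z‖ < 1 → ‖(a * z + b) / (c * z + d)‖ ≤ 1 := by
  intro z hz
  rcases eq_or_ne (c*z+d) 0 with h0 | h0
  · rw [h0, div_zero, norm_zero]; norm_num
  set E := b * (starRingEnd ℂ) d - a * (starRingEnd ℂ) c with hE
  set D := a * d - b * c with hD
  have hDpos : 0 < ‖D‖ := norm_pos_iff.2 h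
  have hp : 0 < ‖d‖^2 - ‖c‖^2 := lt_of_lt_of_le (by positivity) hB
  have hcd : ‖c‖ ≤ ‖d‖ := by nlinarith [norm_nonneg c, norm_nonneg d]
  rw [norm_div, div_le_one (norm_pos_iff.2 h0), ← sub_nonneg]
  have hid := lfm_key_id a b c d z
  rw [lfm_cast] at hid
  have hnorm := congrArg norm hid
  rw [norm_mul, Complex.norm_real, Real.norm_eq_abs, abs_of_pos hp] at hnorm
  have htri : ‖E * (c*z+d) + D * ((starRingEnd ℂ) d * z + (starRingEnd ℂ) c)‖
      ≤ ‖E‖ * ‖c*z+d‖ + ‖D‖ * ‖c*z+d‖ := by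
    calc _ ≤ ‖E * (c*z+d)‖ + ‖D * ((starRingEnd ℂ) d * z + (starRingEnd ℂ) c)‖ := norm_add_le _ _
    _ ≤ ‖E‖ * ‖c*z+d‖ + ‖D‖ * ‖c*z+d‖ := by
        rw [norm_mul, norm_mul]
        have := lfm_conj_le c d z hz.le hcd
        nlinarith [norm_nonneg E]
  rw [← hE, ← hD] at hnorm
  rw [← hnorm] at htri
  nlinarith [norm_nonneg (c*z+d), mul_le_mul_of_nonneg_right hB (norm_nonneg (c*z+d))]

private lemma lfm_hard (a b c d : ℂ) (h : a * d - b * c ≠ 0)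
    (L1 : ∀ z : ℂ, ‖z‖ ≤ 1 → ‖a*z+b‖ ≤ ‖c*z+d‖) :
    ‖b * (starRingEnd ℂ) d - a * (starRingEnd ℂ) c‖ + ‖a * d - b * c‖
        ≤ ‖d‖ ^ 2 - ‖c‖ ^ 2 := by
  -- Step 1: ‖c‖ < ‖d‖
  have hcd : ‖c‖ < ‖d‖ := by
    by_contra hle
    push_neg at hle
    rcases eq_or_ne c 0 with hc | hc
    · have hd : d = 0 := by
        rw [hc, norm_zero] at hle
        exact norm_le_zero_iff.1 hle
      exact h (by rw [hc, hd]; ring)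
    · have hz0 : ‖-d/c‖ ≤ 1 := by
        rw [norm_div, norm_neg, div_le_one (norm_pos_iff.2 hc)]
        exact hle
      have hden : c * (-d/c) + d = 0 := by
        field_simp
        ring
      have := L1 (-d/c) hz0
      rw [hden, norm_zero] at this
      have hnum : a * (-d/c) + b = 0 := norm_le_zero_iff.1 this
      apply h
      have : a * (c * (-d/c) + d) - c * (a * (-d/c) + b) = a*d - b*c := by ring
      rw [hden, hnum] at this
      simpa using this.symm
  set D := a * d - b * c with hD
  set E := b * (starRingEnd ℂ) d - a * (starRingEnd ℂ) c with hE
  have hDpos : 0 < ‖D‖ := norm_pos_iff.2 h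
  -- unit direction of E (or 1 when E = 0)
  set BU : ℂ := if E = 0 then 1 else E / ‖E‖ with hBU
  have hBU1 : ‖BU‖ = 1 := by
    rw [hBU]
    split_ifs with hE0
    · simp
    · rw [norm_div, Complex.norm_real, Real.norm_eq_abs, abs_of_pos (norm_pos_iff.2 hE0),
        div_self (norm_pos_iff.2 hE0).ne']
  have hEBU : E = (‖E‖ : ℂ) * BU := by
    rw [hBU]
    split_ifs with hE0
    · simp [hE0]
    · have hne : ((‖E‖ : ℝ) : ℂ) ≠ 0 := by exact_mod_cast (norm_pos_iff.2 hE0).ne'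
      rw [mul_comm]
      exact (div_mul_cancel₀ E hne).symm
  set u : ℂ := (starRingEnd ℂ) D / (‖D‖ : ℂ) * BU with hu
  have hu1 : ‖u‖ = 1 := by
    rw [hu, norm_mul, norm_div, RCLike.norm_conj, Complex.norm_real, Real.norm_eq_abs,
      abs_of_pos hDpos, div_self hDpos.ne', hBU1, one_mul]
  have hDu : D * u = (‖D‖ : ℂ) * BU := by
    rw [hu]
    have hmc : D * (starRingEnd ℂ) D = ((‖D‖^2 : ℝ) : ℂ) := by
      rw [Complex.mul_conj, Complex.normSq_eq_norm_sq]
    have hDne : ((‖D‖ : ℝ) : ℂ) ≠ 0 := by exact_mod_cast hDpos.ne'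
    have hre : D * ((starRingEnd ℂ) D / (‖D‖ : ℂ) * BU)
        = (D * (starRingEnd ℂ) D) / (‖D‖ : ℂ) * BU := by ring
    rw [hre, hmc, show ((‖D‖^2 : ℝ) : ℂ) = (‖D‖ : ℂ) * (‖D‖ : ℂ) by push_cast; ring,
      mul_div_assoc, div_self hDne, mul_one]
  have hden : u * c - (starRingEnd ℂ) d ≠ 0 := by
    intro h0
    have : ‖u * c‖ = ‖(starRingEnd ℂ) d‖ := by rw [sub_eq_zero.1 h0]
    rw [norm_mul, hu1, one_mul, RCLike.norm_conj] at this
    exact absurd this (ne_of_lt hcd)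
  set zs : ℂ := ((starRingEnd ℂ) c - u * d) / (u * c - (starRingEnd ℂ) d) with hzs
  have hnum_eq : (starRingEnd ℂ) c - u * d = u * (starRingEnd ℂ) (u * c - (starRingEnd ℂ) d) := by
    have huu : u * (starRingEnd ℂ) u = 1 := by
      rw [Complex.mul_conj]
      rw [Complex.normSq_eq_norm_sq, hu1]
      norm_num
    simp only [map_sub, map_mul, Complex.conj_conj]
    linear_combination (-(starRingEnd ℂ) c) * huu
  have hzs1 : ‖zs‖ = 1 := by
    rw [hzs, norm_div, hnum_eq, norm_mul, hu1, one_mul, RCLike.norm_conj,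
      div_self (norm_pos_iff.2 hden).ne']
  have hz2 : (starRingEnd ℂ) d * zs + (starRingEnd ℂ) c = u * (c * zs + d) := by
    rw [hzs]
    field_simp
    ring
  have hczd : c * zs + d ≠ 0 := by
    intro h0
    have heq : c * zs = -d := by linear_combination h0
    have : ‖c * zs‖ = ‖d‖ := by rw [heq, norm_neg]
    rw [norm_mul, hzs1, mul_one] at this
    exact absurd this hcd.ne
  have hL := L1 zs (le_of_eq hzs1)
  have hid := lfm_key_id a b c d zs
  rw [lfm_cast] at hid
  rw [← hE, ← hD, hz2] at hid
  have hid2 : ((‖d‖^2 - ‖c‖^2 : ℝ) : ℂ) * (a*zs+b)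
      = ((‖E‖ + ‖D‖ : ℝ) : ℂ) * BU * (c*zs+d) := by
    have hsum : E + D * u = ((‖E‖ + ‖D‖ : ℝ) : ℂ) * BU := by
      conv_lhs => rw [hEBU, hDu]
      push_cast
      ring
    have hfact : E * (c * zs + d) + D * (u * (c * zs + d)) = (E + D * u) * (c * zs + d) := by
      ring
    rw [hid, hfact, hsum]
  have hnorm := congrArg norm hid2
  have hp : 0 < ‖d‖^2 - ‖c‖^2 := by nlinarith [norm_nonneg c]
  rw [norm_mul, norm_mul, norm_mul, Complex.norm_real, Complex.norm_real, Real.norm_eq_abs,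
    Real.norm_eq_abs, _root_.abs_of_pos hp, _root_.abs_of_nonneg (by positivity), hBU1,
    mul_one] at hnorm
  have hpos : 0 < ‖c*zs+d‖ := norm_pos_iff.2 hczd
  have : (‖E‖ + ‖D‖) * ‖c*zs+d‖ ≤ (‖d‖^2 - ‖c‖^2) * ‖c*zs+d‖ := by
    rw [← hnorm]
    exact mul_le_mul_of_nonneg_left hL hp.le
  exact le_of_mul_le_mul_right this hpos

/-- A linear fractional map `φ(z) = (az+b)/(cz+d)` with `ad - bc ≠ 0` maps the open unit
disk into the closed unit disk iff `|b·conj d - a·conj c| + |ad - bc| ≤ |d|² - |c|²`. -/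
theorem lfm_self_map_disk_iff (a b c d : ℂ) (h : a * d - b * c ≠ 0) :
    (∀ z : ℂ, ‖z‖ < 1 → ‖(a * z + b) / (c * z + d)‖ ≤ 1) ↔
      ‖b * (starRingEnd ℂ) d - a * (starRingEnd ℂ) c‖ + ‖a * d - b * c‖
        ≤ ‖d‖ ^ 2 - ‖c‖ ^ 2 := by
  constructor
  · intro A
    exact lfm_hard a b c d h (lfm_boundary a b c d h A)
  · intro hB
    exact lfm_easy a b c d h hB
end

section
/- If a linear fractional map φ(z) = (Az+B)/(⟨z,C⟩+D) with D = 1 and |C| < 1, C ≠ 0, can be written as φ = RU·φ_{-C} + M for some matrices R, U and vector M (where φ_{-C} is the ball involution at α = -C), then the center M of the image ellipsoid φ(𝔹^N) satisfies M = (B - AC)/(1 - |C|²). -/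
/-- The inner product `⟨z,w⟩ = Σ zᵢ conj(wᵢ)` on `ℂ^N`. -/
noncomputable def herm {N : ℕ} (z w : EuclideanSpace ℂ (Fin N)) : ℂ :=
  ∑ i, z i * (starRingEnd ℂ) (w i)

/-- The ball involution `φ_α(z) = (α - P_α(z) - s_α Q_α(z))/(1 - ⟨z,α⟩)`, where
`P_α(z) = (⟨z,α⟩/⟨α,α⟩)·α`, `Q_α(z) = z - P_α(z)`, and `s_α = √(1-|α|²)`. -/
noncomputable def ballPhi {N : ℕ} (α z : EuclideanSpace ℂ (Fin N)) :
    EuclideanSpace ℂ (Fin N) :=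
  (1 - herm z α)⁻¹ •
    (α - (herm z α / herm α α) • α
      - ((Real.sqrt (1 - ‖α‖ ^ 2) : ℝ) : ℂ) • (z - (herm z α / herm α α) • α))

lemma herm_self {N : ℕ} (C : EuclideanSpace ℂ (Fin N)) : herm C C = (‖C‖ : ℂ) ^ 2 := by
  have h : ‖C‖ ^ 2 = ∑ i, ‖C i‖ ^ 2 := by
    rw [EuclideanSpace.norm_eq, Real.sq_sqrt]
    positivity
  unfold herm
  simp_rw [Complex.mul_conj]
  rw [← Complex.ofReal_sum]
  norm_cast
  rw [h]
  exact Finset.sum_congr rfl fun i _ => by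
    rw [Complex.normSq_eq_norm_sq]

lemma herm_neg_left {N : ℕ} (z w : EuclideanSpace ℂ (Fin N)) : herm (-z) w = -herm z w := by
  unfold herm
  rw [← Finset.sum_neg_distrib]
  congr 1; ext i
  show (-z) i * _ = _
  simp [neg_mul]

open Matrix in
/-- If the linear fractional map `φ(z) = (Az+B)/(⟨z,C⟩+1)` with `0 ≠ C`, `|C| < 1` can be
written as `φ = RU·φ_{-C} + M`, then the center `M` of the image ellipsoid satisfies
`M = (B - AC)/(1 - |C|²)`. -/
theorem ellipsoid_center {N : ℕ} (A RU : Matrix (Fin N) (Fin N) ℂ)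
    (B C M : EuclideanSpace ℂ (Fin N)) (hC0 : C ≠ 0) (hC : ‖C‖ < 1)
    (hdecomp : ∀ z : EuclideanSpace ℂ (Fin N), ‖z‖ < 1 →
      (herm z C + 1)⁻¹ •
          ((WithLp.equiv 2 (Fin N → ℂ)).symm (A *ᵥ (WithLp.equiv 2 (Fin N → ℂ)) z) + B)
        = (WithLp.equiv 2 (Fin N → ℂ)).symm
            (RU *ᵥ (WithLp.equiv 2 (Fin N → ℂ)) (ballPhi (-C) z)) + M) :
    M = (1 - (‖C‖ : ℂ) ^ 2)⁻¹ •
      (B - (WithLp.equiv 2 (Fin N → ℂ)).symm (A *ᵥ (WithLp.equiv 2 (Fin N → ℂ)) C)) := by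
  have hnorm : ‖(-C : EuclideanSpace ℂ (Fin N))‖ < 1 := by simpa using hC
  have key := hdecomp (-C) hnorm
  have hself : herm (-C : EuclideanSpace ℂ (Fin N)) (-C) = (‖C‖ : ℂ) ^ 2 := by
    rw [show herm (-C : EuclideanSpace ℂ (Fin N)) (-C) = herm C C by
      unfold herm; congr 1; ext i; show (-C) i * starRingEnd ℂ ((-C) i) = _; simp,
      herm_self]
  have hself0 : herm (-C : EuclideanSpace ℂ (Fin N)) (-C) ≠ 0 := by
    rw [hself]
    exact pow_ne_zero _ (Complex.ofReal_ne_zero.mpr (norm_ne_zero_iff.mpr hC0))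
  have hphi : ballPhi (-C : EuclideanSpace ℂ (Fin N)) (-C) = 0 := by
    unfold ballPhi
    rw [div_self hself0, one_smul]
    simp
  rw [hphi] at key
  have hnegC : herm (-C : EuclideanSpace ℂ (Fin N)) C = -(‖C‖ : ℂ) ^ 2 := by
    rw [herm_neg_left, herm_self]
  rw [hnegC] at key
  have h0 : ((WithLp.equiv 2 (Fin N → ℂ)) (0 : EuclideanSpace ℂ (Fin N))) = 0 := rfl
  rw [h0, Matrix.mulVec_zero] at key
  have h1 : ((WithLp.equiv 2 (Fin N → ℂ)).symm (0 : Fin N → ℂ)) = 0 := rfl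
  rw [h1, zero_add] at key
  have h2 : ((WithLp.equiv 2 (Fin N → ℂ)) (-C)) = -((WithLp.equiv 2 (Fin N → ℂ)) C) := rfl
  rw [h2, Matrix.mulVec_neg] at key
  have h3 : ((WithLp.equiv 2 (Fin N → ℂ)).symm (-(A *ᵥ (WithLp.equiv 2 (Fin N → ℂ)) C)))
      = -((WithLp.equiv 2 (Fin N → ℂ)).symm (A *ᵥ (WithLp.equiv 2 (Fin N → ℂ)) C)) := rfl
  rw [h3] at key
  rw [← key]
  ring_nf
  rw [neg_add_eq_sub]
end
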